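/- Let H be the Hermitian-adjacency matrix of a k-regular mixed graph G^φ on n vertices with H² = k·I. Then for any pair of distinct vertices u and v of the underlying graph G, the number of common neighbors |N(u) ∩ N(v)| is even. -/

import Mathlib

open Matrix BigOperators

/-- If `H` is the Hermitian-adjacency matrix of a `k`-regular mixed graph on `n`
vertices with `H ^ 2 = k • I`, then any two distinct vertices have an even number of
common neighbors. -/
theorem even_common_neighbors {n k : ℕ} (G : SimpleGraph (Fin n)) [DecidableRel G.Adj]
    (H : Matrix (Fin n) (Fin n) ℂ) (hH : H.IsHermitian)
    (hadj : ∀ u v, G.Adj u v → H u v ∈ ({1, Complex.I, -Complex.I} : Set ℂ))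
    (hnadj : ∀ u v, ¬ G.Adj u v → H u v = 0)
    (hreg : ∀ v, G.degree v = k)
    (hsq : H ^ 2 = (k : ℂ) • (1 : Matrix (Fin n) (Fin n) ℂ))
    (u v : Fin n) (huv : u ≠ v) :
    Even ((G.neighborFinset u ∩ G.neighborFinset v).card) := by
  classical
  set S := G.neighborFinset u ∩ G.neighborFinset v with hS
  set f : Fin n → ℂ := fun w => H u w * H w v with hf
  have hmem : ∀ w ∈ S, f w = 1 ∨ f w = -1 ∨ f w = Complex.I ∨ f w = -Complex.I := by
    intro w hw
    simp only [hS, Finset.mem_inter, SimpleGraph.mem_neighborFinset] at hw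
    have h1 := hadj u w hw.1
    have h2 := hadj w v hw.2.symm
    simp only [Set.mem_insert_iff, Set.mem_singleton_iff] at h1 h2
    rcases h1 with h1 | h1 | h1 <;> rcases h2 with h2 | h2 | h2 <;>
      simp [hf, h1, h2, Complex.I_mul_I]
  have hsum : ∑ w ∈ S, f w = 0 := by
    have h0 : (H ^ 2) u v = 0 := by
      rw [hsq]; simp [Matrix.one_apply, huv]
    rw [pow_two, Matrix.mul_apply] at h0
    rw [show (∑ w ∈ S, f w) = ∑ w, f w from
      Finset.sum_subset (Finset.subset_univ S) (by
        intro w _ hw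
        simp only [hS, Finset.mem_inter, SimpleGraph.mem_neighborFinset] at hw
        by_cases h : G.Adj u w
        · have : ¬ G.Adj w v := fun hc => hw ⟨h, hc.symm⟩
          simp [hf, hnadj _ _ this]
        · simp [hf, hnadj _ _ h])]
    exact h0
  set S1 := S.filter (fun w => f w = 1) with hS1
  set T1 := S.filter (fun w => ¬ f w = 1) with hT1
  set S2 := T1.filter (fun w => f w = -1) with hS2
  set T2 := T1.filter (fun w => ¬ f w = -1) with hT2
  set S3 := T2.filter (fun w => f w = Complex.I) with hS3
  set S4 := T2.filter (fun w => ¬ f w = Complex.I) with hS4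
  have hc1 : S1.card + T1.card = S.card :=
    Finset.card_filter_add_card_filter_not _
  have hc2 : S2.card + T2.card = T1.card :=
    Finset.card_filter_add_card_filter_not _
  have hc3 : S3.card + S4.card = T2.card :=
    Finset.card_filter_add_card_filter_not _
  have hsum1 : ∑ w ∈ S, f w = ∑ w ∈ S1, f w + ∑ w ∈ T1, f w :=
    (Finset.sum_filter_add_sum_filter_not S _ f).symm
  have hsum2 : ∑ w ∈ T1, f w = ∑ w ∈ S2, f w + ∑ w ∈ T2, f w :=
    (Finset.sum_filter_add_sum_filter_not T1 _ f).symm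
  have hsum3 : ∑ w ∈ T2, f w = ∑ w ∈ S3, f w + ∑ w ∈ S4, f w :=
    (Finset.sum_filter_add_sum_filter_not T2 _ f).symm
  have e1 : ∑ w ∈ S1, f w = (S1.card : ℂ) := by
    rw [Finset.sum_congr rfl (fun w hw => (Finset.mem_filter.mp hw).2)]
    simp
    rfl
  have e2 : ∑ w ∈ S2, f w = (S2.card : ℂ) * (-1) := by
    rw [Finset.sum_congr rfl (fun w hw => (Finset.mem_filter.mp hw).2)]
    simp [mul_comm]
    rfl
  have e3 : ∑ w ∈ S3, f w = (S3.card : ℂ) * Complex.I := by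
    rw [Finset.sum_congr rfl (fun w hw => (Finset.mem_filter.mp hw).2)]
    simp [mul_comm]
    rfl
  have e4 : ∑ w ∈ S4, f w = (S4.card : ℂ) * (-Complex.I) := by
    have : ∀ w ∈ S4, f w = -Complex.I := by
      intro w hw
      simp only [hS4, hT2, hT1, Finset.mem_filter] at hw
      rcases hmem w hw.1.1.1 with h | h | h | h
      · exact absurd h hw.1.1.2
      · exact absurd h hw.1.2
      · exact absurd h hw.2
      · exact h
    rw [Finset.sum_congr rfl this]
    simp [mul_comm]
  have key : (S1.card : ℂ) + (S2.card : ℂ) * (-1) + ((S3.card : ℂ) * Complex.I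
      + (S4.card : ℂ) * (-Complex.I)) = 0 := by
    rw [← e1, ← e2, ← e3, ← e4, ← hsum3, add_assoc, ← hsum2, ← hsum1, hsum]
  have hre : (S1.card : ℝ) - (S2.card : ℝ) = 0 := by
    have := congrArg Complex.re key
    simpa [sub_eq_add_neg] using this
  have him : (S3.card : ℝ) - (S4.card : ℝ) = 0 := by
    have := congrArg Complex.im key
    simpa [sub_eq_add_neg] using this
  have h12 : S1.card = S2.card := by
    have : (S1.card : ℝ) = (S2.card : ℝ) := by linarith
    exact_mod_cast this
  have h34 : S3.card = S4.card := by
    have : (S3.card : ℝ) = (S4.card : ℝ) := by linarith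
    exact_mod_cast this
  refine ⟨S1.card + S3.card, ?_⟩
  omega
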